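/- Let Θ be a compact metric space, M : Θ → ℝ continuous with unique well-separated maximizer θ₀, and let Mₙ : Θ → ℝ be random functions with sup_{θ∈Θ} |Mₙ(θ) - M(θ)| → 0 in probability. If θ̂ₙ maximizes Mₙ, then θ̂ₙ → θ₀ in probability. -/

import Mathlib

open MeasureTheory Filter

/-- argmax consistency, cf. van der Vaart & Wellner Cor. 3.2.3: Θ compact
metric, M continuous with unique well-separated maximizer θ₀, Mₙ random criteria
converging uniformly to M in probability, and θ̂ₙ maximizing Mₙ; then θ̂ₙ → θ₀ in
probability. -/
theorem stmt_15 {Θ : Type*} [MetricSpace Θ] [CompactSpace Θ] [Nonempty Θ]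
    {Ω : Type*} {mΩ : MeasurableSpace Ω} (P : Measure Ω) [IsProbabilityMeasure P]
    (M : Θ → ℝ) (hM : Continuous M) (θ0 : Θ)
    (hmax : ∀ θ, M θ ≤ M θ0)
    (hsep : ∀ ε > 0, ∃ δ > 0, ∀ θ, ε ≤ dist θ θ0 → M θ ≤ M θ0 - δ)
    (Mn : ℕ → Ω → Θ → ℝ) (θhat : ℕ → Ω → Θ)
    (hargmax : ∀ n ω θ, Mn n ω θ ≤ Mn n ω (θhat n ω))
    (hunif : ∀ ε > 0,
      Tendsto (fun n => P {ω | ∃ θ, ε ≤ |Mn n ω θ - M θ|}) atTop (nhds 0)) :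
    ∀ ε > 0, Tendsto (fun n => P {ω | ε ≤ dist (θhat n ω) θ0}) atTop (nhds 0) := by

  intro ε hε
  obtain ⟨δ, hδ, hδsep⟩ := hsep ε hε
  have hsub : ∀ n, {ω | ε ≤ dist (θhat n ω) θ0} ⊆ {ω | ∃ θ, δ/2 ≤ |Mn n ω θ - M θ|} := by
    intro n ω hω
    by_contra hc
    simp only [Set.mem_setOf_eq] at hc
    simp only [Set.mem_setOf_eq, not_exists, not_le] at hc
    have h1 : M (θhat n ω) ≤ M θ0 - δ := hδsep _ hω
    have h2 := hc (θhat n ω)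
    have h3 := hc θ0
    have h4 := hargmax n ω θ0
    have h5 : |Mn n ω (θhat n ω) - M (θhat n ω)| < δ/2 := h2
    have h6 : |Mn n ω θ0 - M θ0| < δ/2 := h3
    rw [abs_lt] at h5 h6
    linarith [h5.2, h6.1]
  refine tendsto_of_tendsto_of_tendsto_of_le_of_le tendsto_const_nhds
    (hunif (δ/2) (by linarith)) (fun n => zero_le) (fun n => measure_mono (hsub n))
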